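/- Let μ be a finite measure on a measurable space X with total mass γ₀ = μ(X) ∈ (0, ∞), let 0 ≤ a with a·γ₀ ≤ 1, and let g₀ be a density with respect to μ. Then the shifted density g_{0,a} := a + (1 − aγ₀)·g₀ satisfies d_H²(g_{0,a}, g₀) = ∫_X (√(g_{0,a}(x)) − √(g₀(x)))² dμ(x) ≤ 2·γ₀·a. -/

import Mathlib

open MeasureTheory

lemma sqrt_sub_sq_le_abs {u v : ℝ} (hu : 0 ≤ u) (hv : 0 ≤ v) :
    (Real.sqrt u - Real.sqrt v) ^ 2 ≤ |u - v| := by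
  rcases le_total v u with h | h
  · rw [abs_of_nonneg (by linarith)]
    have hs : Real.sqrt v ≤ Real.sqrt u := Real.sqrt_le_sqrt h
    nlinarith [Real.sq_sqrt hu, Real.sq_sqrt hv, Real.sqrt_nonneg u, Real.sqrt_nonneg v]
  · rw [abs_of_nonpos (by linarith)]
    have hs : Real.sqrt u ≤ Real.sqrt v := Real.sqrt_le_sqrt h
    nlinarith [Real.sq_sqrt hu, Real.sq_sqrt hv, Real.sqrt_nonneg u, Real.sqrt_nonneg v]

/-- The squared Hellinger distance between a density and its shift:
`d_H²(g₀ₐ, g₀) ≤ 2γ₀a`. -/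
theorem hellinger_sq_shift_le {X : Type*} [MeasurableSpace X]
    (μ : Measure X) [IsFiniteMeasure μ]
    (γ₀ : ℝ) (hγ₀ : γ₀ = (μ Set.univ).toReal) (hγpos : 0 < γ₀)
    (a : ℝ) (ha : 0 ≤ a) (haγ : a * γ₀ ≤ 1)
    (g₀ : X → ℝ) (hg₀m : Measurable g₀) (hg₀0 : ∀ x, 0 ≤ g₀ x)
    (hg₀i : Integrable g₀ μ) (hg₀1 : ∫ x, g₀ x ∂μ = 1) :
    ∫ x, (Real.sqrt (a + (1 - a * γ₀) * g₀ x) - Real.sqrt (g₀ x)) ^ 2 ∂μ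
      ≤ 2 * γ₀ * a := by
  have hbi : Integrable (fun x => a + a * γ₀ * g₀ x) μ :=
    (integrable_const a).add (hg₀i.const_mul _)
  have hle : ∫ x, (Real.sqrt (a + (1 - a * γ₀) * g₀ x) - Real.sqrt (g₀ x)) ^ 2 ∂μ
      ≤ ∫ x, (a + a * γ₀ * g₀ x) ∂μ := by
    apply integral_mono_of_nonneg
    · filter_upwards with x using sq_nonneg _
    · exact hbi
    · filter_upwards with x
      have hg := hg₀0 x
      have hu : (0:ℝ) ≤ a + (1 - a * γ₀) * g₀ x := by nlinarith
      have h1 := sqrt_sub_sq_le_abs hu hg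
      have h2 : |a + (1 - a * γ₀) * g₀ x - g₀ x| ≤ a + a * γ₀ * g₀ x := by
        rw [abs_le]
        constructor <;> nlinarith [mul_nonneg (mul_nonneg ha hγpos.le) hg]
      exact h1.trans h2
  have hcalc : ∫ x, (a + a * γ₀ * g₀ x) ∂μ = 2 * γ₀ * a := by
    rw [integral_add (integrable_const a) (hg₀i.const_mul _), integral_const,
      integral_const_mul, hg₀1, smul_eq_mul, measureReal_def, ← hγ₀]
    ring
  linarith
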